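/- Let y, z : ℤ → ℝ be sequences of positive reals satisfying the coupled q-Painlevé III recurrences y_{n+3} z_n (1/z_{n+2} + 1)(1/y_{n+1} + 1) = (y_{n+2} + 1)(z_{n+1} + 1) and z_{n+3} y_n (1/y_{n+2} + 1)(1/z_{n+1} + 1) = (z_{n+2} + 1)(y_{n+1} + 1) for all n ∈ ℤ. Then the quantity u_n := y_{n+2} (1/z_{n+1} + 1) / (z_n (1/y_{n+1} + 1)) is a conserved quantity, i.e., u_{n+1} = u_n for all n ∈ ℤ. -/

import Mathlib

/-- For positive solutions of the coupled q-Painlevé III recurrences,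
`u n := y (n+2) * (1/z (n+1) + 1) / (z n * (1/y (n+1) + 1))` is conserved. -/
theorem qPIII_conserved_u
    (y z : ℤ → ℝ) (hy : ∀ n : ℤ, 0 < y n) (hz : ∀ n : ℤ, 0 < z n)
    (hrec₁ : ∀ n : ℤ,
      y (n + 3) * z n * (1 / z (n + 2) + 1) * (1 / y (n + 1) + 1) =
        (y (n + 2) + 1) * (z (n + 1) + 1))
    (hrec₂ : ∀ n : ℤ,
      z (n + 3) * y n * (1 / y (n + 2) + 1) * (1 / z (n + 1) + 1) =
        (z (n + 2) + 1) * (y (n + 1) + 1)) :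
    ∀ n : ℤ,
      y (n + 1 + 2) * (1 / z (n + 1 + 1) + 1) / (z (n + 1) * (1 / y (n + 1 + 1) + 1)) =
        y (n + 2) * (1 / z (n + 1) + 1) / (z n * (1 / y (n + 1) + 1)) := by
  intro n
  have key := hrec₁ n
  have h0 : (n : ℤ) + 1 + 2 = n + 3 := by ring
  have h1 : (n : ℤ) + 1 + 1 = n + 2 := by ring
  rw [h0, h1]
  have hy1 := (hy (n + 1)).ne'
  have hy2 := (hy (n + 2)).ne'
  have hy3 := (hy (n + 3)).ne'
  have hz0 := (hz n).ne'
  have hz1 := (hz (n + 1)).ne'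
  have hz2 := (hz (n + 2)).ne'
  have p1 := hy (n + 1); have p2 := hy (n + 2); have p3 := hy (n + 3)
  have q0 := hz n; have q1 := hz (n + 1); have q2 := hz (n + 2)
  rw [div_eq_div_iff (by positivity) (by positivity)]
  field_simp at key ⊢
  linear_combination key
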